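/- Let M be an N×N real symmetric matrix all of whose eigenvalues are at most d, where d > 0. Let 0 < 2ε < γ ≤ 1, and let W be the span of the eigenvectors of M with eigenvalue greater than (1−γ)d, with P_W the orthogonal projection onto W. If y is a unit vector with yᵀ M y ≥ (1−2ε)d, then ‖y − P_W y‖ ≤ √(2ε/γ); equivalently, ‖P_W y‖ ≥ √(1 − 2ε/γ). -/

import Mathlib

open Matrix Finset InnerProductSpace

set_option maxHeartbeats 1000000 in
/-- Let `M` be a real symmetric matrix with all eigenvalues at most
`d > 0`, let `0 < 2ε < γ ≤ 1`, and let `W` be the span of the eigenvectors of `M` with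
eigenvalue greater than `(1−γ)d`. If `y` is a unit vector with `yᵀ M y ≥ (1−2ε)d`,
then `‖y − P_W y‖ ≤ √(2ε/γ)` and `‖P_W y‖ ≥ √(1 − 2ε/γ)`. -/
theorem close_to_top_eigenspace
    {N : ℕ} (M : Matrix (Fin N) (Fin N) ℝ) (hM : M.IsSymm)
    (d ε γ : ℝ) (hd : 0 < d) (hε : 0 < 2 * ε) (hεγ : 2 * ε < γ) (hγ : γ ≤ 1)
    (heig : ∀ (μ : ℝ) (v : EuclideanSpace ℝ (Fin N)),
        v ≠ 0 → M.mulVec v = μ • v → μ ≤ d)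
    (W : Submodule ℝ (EuclideanSpace ℝ (Fin N)))
    (hW : W = Submodule.span ℝ {v : EuclideanSpace ℝ (Fin N) |
        v ≠ 0 ∧ ∃ μ : ℝ, (1 - γ) * d < μ ∧ M.mulVec v = μ • v})
    (y : EuclideanSpace ℝ (Fin N)) (hy : ‖y‖ = 1)
    (hquad : (1 - 2 * ε) * d ≤ y ⬝ᵥ M.mulVec y) :
    ‖y - (Submodule.orthogonalProjectionOnto W y : EuclideanSpace ℝ (Fin N))‖ ≤ Real.sqrt (2 * ε / γ) ∧
    Real.sqrt (1 - 2 * ε / γ)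
      ≤ ‖(Submodule.orthogonalProjectionOnto W y : EuclideanSpace ℝ (Fin N))‖ := by
  classical
  have hγ0 : 0 < γ := lt_trans hε hεγ
  have hH : M.IsHermitian := by
    rw [Matrix.IsHermitian, Matrix.conjTranspose_eq_transpose_of_trivial]; exact hM
  set b := hH.eigenvectorBasis with hb
  set μ := hH.eigenvalues with hμdef
  have hbv : ∀ i, M.mulVec (b i) = (μ i : ℝ) • (b i : EuclideanSpace ℝ (Fin N)) :=
    fun i => hH.mulVec_eigenvectorBasis i
  set Mv : EuclideanSpace ℝ (Fin N) → EuclideanSpace ℝ (Fin N) :=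
    fun v => (WithLp.equiv 2 (Fin N → ℝ)).symm (M.mulVec v) with hMv
  have hsym : ∀ x w : EuclideanSpace ℝ (Fin N), ⟪Mv x, w⟫_ℝ = ⟪x, Mv w⟫_ℝ :=
    fun x w => (Matrix.isHermitian_iff_isSymmetric.mp hH) x w
  have hbv' : ∀ i, Mv (b i) = μ i • (b i : EuclideanSpace ℝ (Fin N)) := fun i => by
    rw [hMv]; dsimp only; rw [hbv i]; rfl
  have hμd : ∀ i, μ i ≤ d := fun i =>
    heig (μ i) (b i) (b.orthonormal.ne_zero i) (hbv i)
  set c : Fin N → ℝ := fun i => ⟪(b i : EuclideanSpace ℝ (Fin N)), y⟫_ℝ with hc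
  have hy' : ∑ i, c i • (b i : EuclideanSpace ℝ (Fin N)) = y := b.sum_repr' y
  -- total mass of coefficients is 1
  have hsum1 : ∑ i, c i * c i = 1 := by
    have h := b.orthonormal.inner_sum c c Finset.univ
    rw [hy'] at h
    simp only [conj_trivial] at h
    rw [← h, real_inner_self_eq_norm_sq, hy, one_pow]
  -- the quadratic form
  have hMvL : Mv = ⇑(M.toEuclideanLin) := rfl
  have hMy : Mv y = ∑ i, (μ i * c i) • (b i : EuclideanSpace ℝ (Fin N)) := by
    conv_lhs => rw [← hy']
    rw [hMvL, map_sum]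
    refine Finset.sum_congr rfl fun i _ => ?_
    rw [LinearMap.map_smul, show M.toEuclideanLin (b i) = Mv (b i) from rfl,
      hbv' i, smul_smul, mul_comm]
  have hquad' : y ⬝ᵥ M.mulVec y = ∑ i, μ i * (c i * c i) := by
    have h1 : y ⬝ᵥ M.mulVec y = ⟪y, Mv y⟫_ℝ := by
      simp [hMv, PiLp.inner_apply, RCLike.inner_apply, dotProduct, conj_trivial,
        mul_comm]
    rw [h1, hMy]
    conv_lhs => rw [← hy']
    rw [b.orthonormal.inner_sum]
    simp only [conj_trivial]
    exact Finset.sum_congr rfl fun i _ => by ring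
  set P : Fin N → Prop := fun i => (1 - γ) * d < μ i with hP
  set a : Fin N → ℝ := fun i => if P i then c i else 0 with ha
  set e : Fin N → ℝ := fun i => if P i then 0 else c i with he
  set z : EuclideanSpace ℝ (Fin N) := ∑ i, a i • (b i : EuclideanSpace ℝ (Fin N)) with hz
  -- every vector of W is orthogonal to b i when μ i ≤ (1-γ)d
  have hperp : ∀ w ∈ W, ∀ i, ¬ P i → ⟪(b i : EuclideanSpace ℝ (Fin N)), w⟫_ℝ = 0 := by
    intro w hw i hi
    rw [hW] at hw
    induction hw using Submodule.span_induction with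
    | mem v hv =>
      obtain ⟨hv0, ν, hν, hνeq⟩ := hv
      have h1 : ν * ⟪(b i : EuclideanSpace ℝ (Fin N)), v⟫_ℝ
          = μ i * ⟪(b i : EuclideanSpace ℝ (Fin N)), v⟫_ℝ := by
        have h0 : Mv v = ν • v := by rw [hMv]; dsimp only; rw [hνeq]; rfl
        have h3 : ⟪(b i : EuclideanSpace ℝ (Fin N)), Mv v⟫_ℝ
            = ν * ⟪(b i : EuclideanSpace ℝ (Fin N)), v⟫_ℝ := by
          rw [h0, real_inner_smul_right]
        rw [← h3, ← hsym (b i) v, hbv' i, real_inner_smul_left]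
      have hne : ν ≠ μ i := by intro h; subst h; exact hi hν
      have h2 : (ν - μ i) * ⟪(b i : EuclideanSpace ℝ (Fin N)), v⟫_ℝ = 0 := by
        rw [sub_mul, h1, sub_self]
      rcases mul_eq_zero.mp h2 with h | h
      · exact absurd (sub_eq_zero.mp h) hne
      · exact h
    | zero => simp
    | add u v hu hv ihu ihv => rw [inner_add_right, ihu, ihv, add_zero]
    | smul t u hu ihu => rw [inner_smul_right, ihu, mul_zero]
  -- the orthogonal projection of y onto W is z
  have hproj : (Submodule.orthogonalProjectionOnto W y : EuclideanSpace ℝ (Fin N)) = z := by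
    rw [← Submodule.starProjection_apply]
    apply Submodule.eq_starProjection_of_mem_of_inner_eq_zero
    · refine Submodule.sum_mem _ fun i _ => ?_
      by_cases hi : P i
      · simp only [ha, if_pos hi]
        refine W.smul_mem _ ?_
        rw [hW]
        exact Submodule.subset_span ⟨b.orthonormal.ne_zero i, μ i, hi, hbv i⟩
      · simp only [ha, if_neg hi, zero_smul]
        exact W.zero_mem
    · intro w hw
      have hyz : y - z = ∑ i, e i • (b i : EuclideanSpace ℝ (Fin N)) := by
        rw [← hy', hz, ← Finset.sum_sub_distrib]
        refine Finset.sum_congr rfl fun i _ => ?_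
        rw [← sub_smul]
        congr 1
        simp only [ha, he]
        split_ifs <;> ring
      rw [hyz, sum_inner]
      refine Finset.sum_eq_zero fun i _ => ?_
      rw [real_inner_smul_left]
      by_cases hi : P i
      · simp [he, if_pos hi]
      · rw [hperp w hw i hi, mul_zero]
  -- norms
  have hnormz : ‖z‖ ^ 2 = ∑ i, a i * a i := by
    rw [← real_inner_self_eq_norm_sq, hz]
    have := b.orthonormal.inner_sum a a Finset.univ
    rw [this]; simp
  have hyz : y - z = ∑ i, e i • (b i : EuclideanSpace ℝ (Fin N)) := by
    rw [← hy', hz, ← Finset.sum_sub_distrib]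
    refine Finset.sum_congr rfl fun i _ => ?_
    rw [← sub_smul]
    congr 1
    simp only [ha, he]
    split_ifs <;> ring
  have hnormyz : ‖y - z‖ ^ 2 = ∑ i, e i * e i := by
    rw [← real_inner_self_eq_norm_sq, hyz]
    have := b.orthonormal.inner_sum e e Finset.univ
    rw [this]; simp
  set A := ∑ i, a i * a i with hA
  set E := ∑ i, e i * e i with hE
  have hAE : A + E = 1 := by
    rw [hA, hE, ← Finset.sum_add_distrib, ← hsum1]
    refine Finset.sum_congr rfl fun i _ => ?_
    simp only [ha, he]
    split_ifs <;> ring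
  have hEnonneg : 0 ≤ E := Finset.sum_nonneg fun i _ => mul_self_nonneg _
  have hAnonneg : 0 ≤ A := Finset.sum_nonneg fun i _ => mul_self_nonneg _
  -- quadratic form bound
  have hbound : ∑ i, μ i * (c i * c i)
      ≤ ∑ i, (d * (a i * a i) + (1 - γ) * d * (e i * e i)) := by
    refine Finset.sum_le_sum fun i _ => ?_
    by_cases hi : P i
    · simp only [ha, he, if_pos hi]
      have h1 : μ i ≤ d := hμd i
      nlinarith [mul_self_nonneg (c i)]
    · simp only [ha, he, if_neg hi]
      have h1 : μ i ≤ (1 - γ) * d := not_lt.mp hi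
      nlinarith [mul_self_nonneg (c i)]
  have hbound2 : (1 - 2 * ε) * d ≤ d * A + (1 - γ) * d * E := by
    calc (1 - 2 * ε) * d ≤ y ⬝ᵥ M.mulVec y := hquad
      _ = ∑ i, μ i * (c i * c i) := hquad'
      _ ≤ ∑ i, (d * (a i * a i) + (1 - γ) * d * (e i * e i)) := hbound
      _ = d * A + (1 - γ) * d * E := by
          rw [Finset.sum_add_distrib, hA, hE, Finset.mul_sum, Finset.mul_sum]
  have hEle : E ≤ 2 * ε / γ := by
    have h4 : γ * E ≤ 2 * ε := by nlinarith [hAE]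
    rw [le_div_iff₀ hγ0]
    linarith
  have hAge : 1 - 2 * ε / γ ≤ A := by linarith
  rw [hproj]
  constructor
  · calc ‖y - z‖ = Real.sqrt (‖y - z‖ ^ 2) := (Real.sqrt_sq (norm_nonneg _)).symm
      _ = Real.sqrt E := by rw [hnormyz]
      _ ≤ Real.sqrt (2 * ε / γ) := Real.sqrt_le_sqrt hEle
  · calc Real.sqrt (1 - 2 * ε / γ) ≤ Real.sqrt A := Real.sqrt_le_sqrt hAge
      _ = Real.sqrt (‖z‖ ^ 2) := by rw [hnormz]
      _ = ‖z‖ := Real.sqrt_sq (norm_nonneg _)
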